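/- Let G be a finite simple graph and k a natural number. Then G has a dominating set of size k if and only if G has a spanning subgraph with exactly |V(G)| − k edges in which every connected component is a star. (Equivalently, G can be turned into a constellation by deleting exactly |E(G)| − |V(G)| + k edges.) -/

import Mathlib

/-- A graph is a *constellation* if every connected component is a star:
each component has a center `c` adjacent to every other vertex of the component,
and every edge inside the component is incident to `c`. -/
def IsConstellation {V : Type*} (H : SimpleGraph V) : Prop :=
  ∀ C : H.ConnectedComponent, ∃ c : V, H.connectedComponentMk c = C ∧
    (∀ v : V, H.connectedComponentMk v = C → v ≠ c → H.Adj c v) ∧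
    (∀ u v : V, H.Adj u v → H.connectedComponentMk u = C → (u = c ∨ v = c))

/-- A function constant along edges is constant on connected components. -/
lemma aux_const_on_component {V : Type*} {H : SimpleGraph V} {β : Type*} {f : V → β}
    (hf : ∀ u v, H.Adj u v → f u = f v) {u v : V}
    (h : H.Reachable u v) : f u = f v := by
  obtain ⟨p⟩ := h
  induction p with
  | nil => rfl
  | cons a _ ih => exact (hf _ _ a).trans ih

/-- A finite simple graph `G` has a dominating set of size `k` if and only if
`G` has a spanning subgraph with exactly `|V(G)| - k` edges in which every
connected component is a star. -/
theorem dominatingSet_iff_spanning_constellation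
    {V : Type*} [Fintype V] (G : SimpleGraph V) (k : ℕ) :
    (∃ D : Finset V, D.card = k ∧ ∀ v : V, v ∉ D → ∃ u ∈ D, G.Adj u v) ↔
    (∃ H : SimpleGraph V, H ≤ G ∧ H.edgeSet.ncard + k = Fintype.card V ∧
      IsConstellation H) := by
  classical
  constructor
  · rintro ⟨D, hcard, hdom⟩
    choose f hfD hfAdj using hdom
    set g : V → V := fun v => if h : v ∈ D then v else f v h with hg
    have hgD : ∀ v : V, g v ∈ D := by
      intro v; by_cases h : v ∈ D
      · simp [hg, h]
      · simpa [hg, h] using hfD v h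
    have hgmem : ∀ v : V, v ∈ D → g v = v := by
      intro v h; simp [hg, h]
    have hgAdj : ∀ v : V, v ∉ D → G.Adj (g v) v := by
      intro v h; simpa [hg, h] using hfAdj v h
    set H : SimpleGraph V :=
      { Adj := fun u v => (u ∉ D ∧ v = g u) ∨ (v ∉ D ∧ u = g v)
        symm := ⟨by intro u v h; tauto⟩
        loopless := ⟨by
          rintro u (⟨h1, h2⟩ | ⟨h1, h2⟩) <;> exact h1 (h2 ▸ hgD u)⟩ } with hH
    -- g is constant along edges of H
    have hconst : ∀ u v, H.Adj u v → g u = g v := by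
      rintro u v (⟨h1, h2⟩ | ⟨h1, h2⟩)
      · rw [h2, hgmem _ (hgD u)]
      · rw [h2, hgmem _ (hgD v)]
    refine ⟨H, ?_, ?_, ?_⟩
    · rintro u v (⟨h1, h2⟩ | ⟨h1, h2⟩)
      · exact h2 ▸ (hgAdj u h1).symm
      · exact h2 ▸ (hgAdj v h1)
    · -- edge count
      have himg : H.edgeSet = (fun v => s(g v, v)) '' ((↑D : Set V)ᶜ) := by
        ext e
        refine e.ind (fun u v => ?_)
        simp only [SimpleGraph.mem_edgeSet, Set.mem_image, Set.mem_compl_iff,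
          Finset.mem_coe]
        constructor
        · rintro (⟨h1, h2⟩ | ⟨h1, h2⟩)
          · exact ⟨u, h1, by rw [← h2, Sym2.eq_swap]⟩
          · exact ⟨v, h1, by rw [← h2]⟩
        · rintro ⟨w, hw, hwe⟩
          rw [Sym2.eq_iff] at hwe
          rcases hwe with ⟨h1, h2⟩ | ⟨h1, h2⟩
          · right
            subst h2
            exact ⟨hw, h1.symm⟩
          · left
            subst h2
            exact ⟨hw, h1.symm⟩
      have hinj : Set.InjOn (fun v => s(g v, v)) ((↑D : Set V)ᶜ) := by
        intro x hx y hy hxy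
        simp only [Sym2.eq_iff] at hxy
        rcases hxy with ⟨_, h⟩ | ⟨h1, h2⟩
        · exact h
        · exact absurd (h1 ▸ hgD x) hy
      have hkle : k ≤ Fintype.card V := hcard ▸ Finset.card_le_univ D
      rw [himg, Set.ncard_image_of_injOn hinj, ← Finset.coe_compl,
        Set.ncard_coe_finset, Finset.card_compl, hcard]
      omega
    · -- constellation
      intro C
      obtain ⟨v, hv⟩ := C.exists_rep
      have hv' : H.connectedComponentMk v = C := hv
      refine ⟨g v, ?_, ?_, ?_⟩
      · rw [← hv']
        by_cases h : v ∈ D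
        · rw [hgmem v h]
        · exact SimpleGraph.ConnectedComponent.connectedComponentMk_eq_of_adj
            (Or.inr ⟨h, rfl⟩)
      · intro w hw hne
        have hr := SimpleGraph.ConnectedComponent.exact (hw.trans hv'.symm)
        have hgw : g w = g v := aux_const_on_component hconst hr
        have hwD : w ∉ D := fun h => hne (by rw [← hgw, hgmem w h])
        exact Or.inr ⟨hwD, hgw.symm⟩
      · intro u w huw hu
        have hr := SimpleGraph.ConnectedComponent.exact (hu.trans hv'.symm)
        have hgu : g u = g v := aux_const_on_component hconst hr
        rcases huw with ⟨h1, h2⟩ | ⟨h1, h2⟩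
        · exact Or.inr (h2.trans hgu)
        · left
          have h3 : g u = g w := (congrArg g h2).trans (hgmem (g w) (hgD w))
          rw [h2]
          exact h3.symm.trans hgu
  · rintro ⟨H, hle, hcount, hcon⟩
    choose c hc1 hc2 hc3 using hcon
    set ctr : V → V := fun v => c (H.connectedComponentMk v) with hctr
    have hctrctr : ∀ v, ctr (ctr v) = ctr v := by
      intro v
      simp only [hctr]
      rw [hc1 (H.connectedComponentMk v)]
    have hctrAdj : ∀ v, ctr v ≠ v → H.Adj (ctr v) v := by
      intro v h
      exact hc2 (H.connectedComponentMk v) v rfl (fun he => h he.symm)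
    set D : Finset V := Finset.univ.filter (fun v => ctr v = v) with hD
    have hmemD : ∀ v, v ∈ D ↔ ctr v = v := by
      intro v; simp [hD]
    refine ⟨D, ?_, ?_⟩
    · -- cardinality
      have himg : H.edgeSet = (fun v => s(ctr v, v)) '' ((↑D : Set V)ᶜ) := by
        ext e
        refine e.ind (fun u v => ?_)
        simp only [SimpleGraph.mem_edgeSet, Set.mem_image, Set.mem_compl_iff,
          Finset.mem_coe, hmemD]
        constructor
        · intro hadj
          have hcc : ctr u = ctr v := by
            simp only [hctr]
            rw [SimpleGraph.ConnectedComponent.connectedComponentMk_eq_of_adj hadj]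
          rcases hc3 (H.connectedComponentMk u) u v hadj rfl with h | h
          · have hvu : ctr v = u := hcc.symm.trans h.symm
            refine ⟨v, ?_, ?_⟩
            · intro hv
              exact hadj.ne (hvu.symm.trans hv)
            · rw [hvu]
          · have huv : ctr u = v := h.symm
            refine ⟨u, ?_, ?_⟩
            · intro hu
              exact hadj.ne (hu.symm.trans huv)
            · rw [huv, Sym2.eq_swap]
        · rintro ⟨w, hw, hwe⟩
          have hadj : H.Adj (ctr w) w := hctrAdj w hw
          rw [Sym2.eq_iff] at hwe
          rcases hwe with ⟨h1, h2⟩ | ⟨h1, h2⟩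
          · exact h1 ▸ h2 ▸ hadj
          · exact h1 ▸ h2 ▸ hadj.symm
      have hinj : Set.InjOn (fun v => s(ctr v, v)) ((↑D : Set V)ᶜ) := by
        intro x hx y hy hxy
        simp only [Sym2.eq_iff] at hxy
        rcases hxy with ⟨_, h⟩ | ⟨h1, h2⟩
        · exact h
        · rw [Set.mem_compl_iff, Finset.mem_coe, hmemD] at hx
          exact absurd (by rw [h2, hctrctr, ← h2]) hx
      rw [himg, Set.ncard_image_of_injOn hinj, ← Finset.coe_compl,
        Set.ncard_coe_finset, Finset.card_compl] at hcount
      have := Finset.card_le_univ D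
      omega
    · intro v hv
      rw [hmemD] at hv
      exact ⟨ctr v, (hmemD _).2 (hctrctr v), hle (hctrAdj v hv)⟩
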